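/- arXiv:2112.13363 — 2 statements merged into one kernel-verified Lean document; each statement's English description precedes it below -/
import Mathlib

section
/- Lemma 6.5: Let w₁, w₂ : Λ → ℝ be upper semicontinuous (with respect to d_∞) functions bounded from above with limsup_{t+|x|_C→∞} w₁(t,x)/(t+|x|_C) < 0 and limsup_{t+|x|_C→∞} w₂(t,x)/(t+|x|_C) < 0, and suppose there is a local modulus of continuity ρ₁ with w₁(t,x) - w₁(s,x_{s-t}) ≤ ρ₁(|s-t|,|x|_C) and w₂(t,x) - w₂(s,x_{s-t}) ≤ ρ₁(|s-t|,|x|_C) for all t̂ ≤ t ≤ s < ∞ and x ∈ 𝒞₀. Let φ ∈ C²(ℝ^d×ℝ^d) be such that w₁(t,x) + w₂(t,y) - φ(x(0),y(0)) has a maximum over [t̂,∞)×𝒞₀×𝒞₀ at a point (t̂,x̂,ŷ). Then the function (t,x₀,y₀) ↦ w̃₁^{t̂,*}(t,x₀) + w̃₂^{t̂,*}(t,y₀) - φ(x₀,y₀) has a maximum over [0,∞)×ℝ^d×ℝ^d at (t̂, x̂(0), ŷ(0)), and moreover w̃₁^{t̂,*}(t̂,x̂(0)) = w₁(t̂,x̂)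 and w̃₂^{t̂,*}(t̂,ŷ(0)) = w₂(t̂,ŷ). -/
open Filter Topology MeasureTheory Matrix
open scoped RealInnerProductSpace

noncomputable section

namespace PathHJB

/-- The domain `(-∞,0]` of the paths. -/
abbrev PathDom : Type := Set.Iic (0 : ℝ)

abbrev Eucl (d : ℕ) := EuclideanSpace ℝ (Fin d)

/-- Paths on `(-∞,0]` with values in `ℝ^d`. -/
abbrev Pth (d : ℕ) := PathDom → Eucl d

def zeroPt : PathDom := ⟨0, Set.mem_Iic.mpr le_rfl⟩

/-- The sup norm `|x|_C`. -/
def normC {d : ℕ} (x : Pth d) : ℝ := ⨆ θ : PathDom, ‖x θ‖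

/-- The shifted path `x_h`. -/
def shift {d : ℕ} (x : Pth d) (h : ℝ) : Pth d := fun θ =>
  if hθ : -h ≤ θ.1 then x zeroPt
  else x ⟨θ.1 + h, Set.mem_Iic.mpr (by push_neg at hθ; linarith)⟩

/-- The vertical perturbation `x + v · 1_{{0}}`. -/
def vpert {d : ℕ} (x : Pth d) (v : Eucl d) : Pth d := fun θ =>
  if θ.1 = 0 then x θ + v else x θ

/-- Càdlàg: right-continuous with left limits. -/
def IsCadlag {d : ℕ} (x : Pth d) : Prop :=
  (∀ θ : PathDom, ContinuousWithinAt x {η : PathDom | θ.1 ≤ η.1} θ) ∧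
  (∀ θ : PathDom, ∃ L : Eucl d, Tendsto x (nhdsWithin θ {η : PathDom | η.1 < θ.1}) (nhds L))

/-- `𝒟₀`: càdlàg paths vanishing at `-∞`. -/
def D0 (d : ℕ) : Set (Pth d) := {x | IsCadlag x ∧ Tendsto x atBot (nhds 0)}

/-- `𝒞₀`: continuous paths vanishing at `-∞`. -/
def C0 (d : ℕ) : Set (Pth d) := {x | Continuous x ∧ Tendsto x atBot (nhds 0)}

/-- The metric `d_∞`. -/
def dInfty {d : ℕ} (p q : ℝ × Pth d) : ℝ :=
  if p.1 ≤ q.1 then |q.1 - p.1| + normC (shift p.2 (q.1 - p.1) - q.2)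
  else |p.1 - q.1| + normC (shift q.2 (p.1 - q.1) - p.2)

/-- `Λ̂^t = [t,∞) × 𝒟₀`. -/
def LamHat (d : ℕ) (t : ℝ) : Set (ℝ × Pth d) := {p | t ≤ p.1 ∧ p.2 ∈ D0 d}

/-- `Λ^t = [t,∞) × 𝒞₀`. -/
def Lam (d : ℕ) (t : ℝ) : Set (ℝ × Pth d) := {p | t ≤ p.1 ∧ p.2 ∈ C0 d}

def stdBasis (d : ℕ) (i : Fin d) : Eucl d := EuclideanSpace.single i 1

/-- Horizontal (Dupire) derivative. -/
def HasHorizDerivAt {d : ℕ} (f : ℝ × Pth d → ℝ) (p : ℝ × Pth d) (v : ℝ) : Prop :=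
  Tendsto (fun h : ℝ => (f (p.1 + h, shift p.2 h) - f p) / h) (𝓝[>] (0:ℝ)) (𝓝 v)

/-- Vertical (Dupire) derivative in direction `e_i`. -/
def HasVertDerivAt {d : ℕ} (f : ℝ × Pth d → ℝ) (p : ℝ × Pth d) (i : Fin d) (v : ℝ) : Prop :=
  Tendsto (fun h : ℝ => (f (p.1, vpert p.2 (h • stdBasis d i)) - f p) / h) (𝓝[≠] (0:ℝ)) (𝓝 v)

/-- Continuity on a set w.r.t. `d_∞`. -/
def DContinuousOn {d : ℕ} {E : Type*} [NormedAddCommGroup E]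
    (f : ℝ × Pth d → E) (S : Set (ℝ × Pth d)) : Prop :=
  ∀ p ∈ S, ∀ ε > (0:ℝ), ∃ δ > (0:ℝ), ∀ q ∈ S, dInfty p q < δ → ‖f q - f p‖ < ε

/-- Uniform continuity on a set w.r.t. `d_∞`. -/
def DUnifContOn {d : ℕ} {E : Type*} [NormedAddCommGroup E]
    (f : ℝ × Pth d → E) (S : Set (ℝ × Pth d)) : Prop :=
  ∀ ε > (0:ℝ), ∃ δ > (0:ℝ), ∀ p ∈ S, ∀ q ∈ S, dInfty p q < δ → ‖f q - f p‖ < ε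

def BoundedOn {d : ℕ} {E : Type*} [NormedAddCommGroup E]
    (f : ℝ × Pth d → E) (S : Set (ℝ × Pth d)) : Prop :=
  ∃ M : ℝ, ∀ p ∈ S, ‖f p‖ ≤ M

def PolyGrowthOn {d : ℕ} {E : Type*} [NormedAddCommGroup E]
    (f : ℝ × Pth d → E) (S : Set (ℝ × Pth d)) : Prop :=
  ∃ C : ℝ, ∃ k : ℕ, ∀ p ∈ S, ‖f p‖ ≤ C * (1 + |p.1| + normC p.2) ^ k

/-- `f ∈ C_p^{1,2}(Λ̂^t)`, with prescribed pathwise derivatives. -/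
structure IsCp12Hat (d : ℕ) (t : ℝ) (f : ℝ × Pth d → ℝ) (ft : ℝ × Pth d → ℝ)
    (fx : ℝ × Pth d → Eucl d) (fxx : ℝ × Pth d → Matrix (Fin d) (Fin d) ℝ) : Prop where
  horiz : ∀ p ∈ LamHat d t, HasHorizDerivAt f p (ft p)
  vert : ∀ p ∈ LamHat d t, ∀ i, HasVertDerivAt f p i (fx p i)
  vert2 : ∀ p ∈ LamHat d t, ∀ i j, HasVertDerivAt (fun q => fx q j) p i (fxx p i j)
  cont : DContinuousOn f (LamHat d t)
  cont_t : DContinuousOn ft (LamHat d t)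
  cont_x : DContinuousOn fx (LamHat d t)
  cont_xx : ∀ i j, DContinuousOn (fun p => fxx p i j) (LamHat d t)
  growth : PolyGrowthOn f (LamHat d t)
  growth_t : PolyGrowthOn ft (LamHat d t)
  growth_x : PolyGrowthOn fx (LamHat d t)
  growth_xx : ∀ i j, PolyGrowthOn (fun p => fxx p i j) (LamHat d t)

/-- Hilbert–Schmidt norm of a matrix. -/
def hsNorm {m n : ℕ} (A : Matrix (Fin m) (Fin n) ℝ) : ℝ :=
  Real.sqrt (∑ i, ∑ j, (A i j) ^ 2)

/-- The Hamiltonian `H`. -/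
def Ham {d n : ℕ} {U : Type*} (b : Pth d → U → Eucl d)
    (σ' : Pth d → U → Matrix (Fin d) (Fin n) ℝ) (q : Pth d → U → ℝ)
    (x : Pth d) (p : Eucl d) (l : Matrix (Fin d) (Fin d) ℝ) : ℝ :=
  ⨅ u : U, ((inner ℝ p (b x u) : ℝ) + (1/2) * (l * (σ' x u * (σ' x u)ᵀ)).trace + q x u)

/-- Hypothesis 4.2. -/
structure Hyp42 {d n : ℕ} {U : Type*} [PseudoMetricSpace U] (L : ℝ)
    (b : Pth d → U → Eucl d) (σ' : Pth d → U → Matrix (Fin d) (Fin n) ℝ)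
    (q : Pth d → U → ℝ) : Prop where
  pos : 0 < L
  continuous : ∀ x ∈ C0 d, ∀ u : U, ∀ ε > (0:ℝ), ∃ δ > (0:ℝ), ∀ y ∈ C0 d, ∀ u' : U,
    normC (x - y) < δ → dist u u' < δ →
    ‖b x u - b y u'‖ < ε ∧ hsNorm (σ' x u - σ' y u') < ε ∧ |q x u - q y u'| < ε
  bound_b : ∀ x ∈ C0 d, ∀ u : U, ‖b x u‖ ^ 2 ≤ L ^ 2 * (1 + normC x ^ 2)
  bound_σ : ∀ x ∈ C0 d, ∀ u : U, hsNorm (σ' x u) ^ 2 ≤ L ^ 2 * (1 + normC x ^ 2)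
  bound_q : ∀ x ∈ C0 d, ∀ u : U, (q x u) ^ 2 ≤ L ^ 2 * (1 + normC x ^ 2)
  lip_b : ∀ x ∈ C0 d, ∀ y ∈ C0 d, ∀ u : U, ‖b x u - b y u‖ ≤ L * normC (x - y)
  lip_σ : ∀ x ∈ C0 d, ∀ y ∈ C0 d, ∀ u : U, hsNorm (σ' x u - σ' y u) ≤ L * normC (x - y)
  lip_q : ∀ x ∈ C0 d, ∀ y ∈ C0 d, ∀ u : U, |q x u - q y u| ≤ L * normC (x - y)

/-- Viscosity subsolution of `-λ w + ∂_t w + H(x, ∂_x w, ∂_{xx} w) = 0`. -/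
def IsViscSubsol {d n : ℕ} {U : Type*} (lam : ℝ) (b : Pth d → U → Eucl d)
    (σ' : Pth d → U → Matrix (Fin d) (Fin n) ℝ) (q : Pth d → U → ℝ)
    (w : Pth d → ℝ) : Prop :=
  ∀ s : ℝ, 0 ≤ s → ∀ x ∈ C0 d,
    ∀ (φ φt : ℝ × Pth d → ℝ) (φx : ℝ × Pth d → Eucl d)
      (φxx : ℝ × Pth d → Matrix (Fin d) (Fin d) ℝ),
      IsCp12Hat d s φ φt φx φxx →
      w x - φ (s, x) = 0 →
      (∀ p ∈ Lam d s, w p.2 - φ p ≤ 0) →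
      0 ≤ -lam * w x + φt (s, x) + Ham b σ' q x (φx (s, x)) (φxx (s, x))

/-- Viscosity supersolution. -/
def IsViscSupersol {d n : ℕ} {U : Type*} (lam : ℝ) (b : Pth d → U → Eucl d)
    (σ' : Pth d → U → Matrix (Fin d) (Fin n) ℝ) (q : Pth d → U → ℝ)
    (w : Pth d → ℝ) : Prop :=
  ∀ s : ℝ, 0 ≤ s → ∀ x ∈ C0 d,
    ∀ (φ φt : ℝ × Pth d → ℝ) (φx : ℝ × Pth d → Eucl d)
      (φxx : ℝ × Pth d → Matrix (Fin d) (Fin d) ℝ),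
      IsCp12Hat d s φ φt φx φxx →
      w x + φ (s, x) = 0 →
      (∀ p ∈ Lam d s, 0 ≤ w p.2 + φ p) →
      -lam * w x - φt (s, x) + Ham b σ' q x (-φx (s, x)) (-φxx (s, x)) ≤ 0


/-- The two-argument functional `S_m(t,x,s,y)`. -/
def SmP {d : ℕ} (m : ℕ) (p q : ℝ × Pth d) : ℝ :=
  if normC (shift p.2 (max (q.1 - p.1) 0) - shift q.2 (max (p.1 - q.1) 0)) = 0 then 0
  else (normC (shift p.2 (max (q.1 - p.1) 0) - shift q.2 (max (p.1 - q.1) 0)) ^ (2*m)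
        - ‖p.2 zeroPt - q.2 zeroPt‖ ^ (2*m)) ^ 3
       / normC (shift p.2 (max (q.1 - p.1) 0) - shift q.2 (max (p.1 - q.1) 0)) ^ (4*m)

/-- `Υ^{m,M}(t,x,s,y)`. -/
def UpsP {d : ℕ} (m : ℕ) (M : ℝ) (p q : ℝ × Pth d) : ℝ :=
  SmP m p q + M * ‖p.2 zeroPt - q.2 zeroPt‖ ^ (2*m)

/-- `Ῡ^{m,M}(t,x,s,y) = Υ^{m,M}(t,x,s,y) + |s-t|²`. -/
def UpsBarP {d : ℕ} (m : ℕ) (M : ℝ) (p q : ℝ × Pth d) : ℝ :=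
  UpsP m M p q + (q.1 - p.1) ^ 2

/-- The single-path functional `Υ^{m,M}(x)`. -/
def Ups0 {d : ℕ} (m : ℕ) (M : ℝ) (x : Pth d) : ℝ :=
  (if normC x = 0 then 0
   else (normC x ^ (2*m) - ‖x zeroPt‖ ^ (2*m)) ^ 3 / normC x ^ (4*m))
  + M * ‖x zeroPt‖ ^ (2*m)

/-- `w̃^{t̂}` before taking the upper semicontinuous envelope:
the sup of `w(t,ξ)` over `ξ ∈ 𝒞₀` with `ξ(0) = x₀`. -/
def sliceSup {d : ℕ} (w : ℝ × Pth d → ℝ) (t : ℝ) (x0 : Eucl d) : ℝ :=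
  sSup {r : ℝ | ∃ ξ ∈ C0 d, ξ zeroPt = x0 ∧ r = w (t, ξ)}

def tildeW {d : ℕ} (w : ℝ × Pth d → ℝ) (tHat : ℝ) : ℝ × Eucl d → ℝ := fun p =>
  if tHat ≤ p.1 then sliceSup w p.1 p.2
  else sliceSup w tHat p.2 - Real.sqrt (tHat - p.1)

/-- Upper semicontinuous envelope. -/
def uscEnv {d : ℕ} (g : ℝ × Eucl d → ℝ) : ℝ × Eucl d → ℝ := fun p =>
  Filter.limsup g (nhds p)

/-- A local modulus of continuity. -/
structure LocalModulus (ρ : ℝ → ℝ → ℝ) : Prop where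
  cont : Continuous fun p : ℝ × ℝ => ρ p.1 p.2
  nonneg : ∀ t r, 0 ≤ t → 0 ≤ r → 0 ≤ ρ t r
  zero : ∀ r, 0 ≤ r → ρ 0 r = 0
  subadd : ∀ t s r, 0 ≤ t → 0 ≤ s → 0 ≤ r → ρ (t + s) r ≤ ρ t r + ρ s r
  mono : ∀ t r r', 0 ≤ t → 0 ≤ r → r ≤ r' → ρ t r ≤ ρ t r'

/-- Upper semicontinuity on a set w.r.t. `d_∞`. -/
def DUSCOn {d : ℕ} (w : ℝ × Pth d → ℝ) (S : Set (ℝ × Pth d)) : Prop :=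
  ∀ p ∈ S, ∀ ε > (0:ℝ), ∃ δ > (0:ℝ), ∀ q ∈ S, dInfty p q < δ → w q < w p + ε

def BddAboveOn {d : ℕ} (w : ℝ × Pth d → ℝ) (S : Set (ℝ × Pth d)) : Prop :=
  ∃ M : ℝ, ∀ p ∈ S, w p ≤ M

/-- `limsup_{t+|x|_C → ∞} w(t,x)/(t+|x|_C) < 0` on `Λ`. -/
def NegLimsupAtInfty {d : ℕ} (w : ℝ × Pth d → ℝ) : Prop :=
  ∃ c < (0:ℝ), ∃ R : ℝ, ∀ p ∈ Lam d 0, R ≤ p.1 + normC p.2 →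
    w p ≤ c * (p.1 + normC p.2)

/-- `φ ∈ C^{1,2}([0,∞) × ℝ^d)` with prescribed derivatives. -/
structure IsC12Fin (d : ℕ) (φ φt : ℝ × Eucl d → ℝ) (φx : ℝ × Eucl d → Eucl d)
    (φxx : ℝ × Eucl d → Matrix (Fin d) (Fin d) ℝ) : Prop where
  ht : ∀ p : ℝ × Eucl d, HasDerivAt (fun s => φ (s, p.2)) (φt p) p.1
  hx : ∀ p : ℝ × Eucl d, HasGradientAt (fun y => φ (p.1, y)) (φx p) p.2
  hxx : ∀ p : ℝ × Eucl d, ∀ i j,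
    HasDerivAt (fun h : ℝ => φx (p.1, p.2 + h • stdBasis d j) i) (φxx p i j) 0
  cont : Continuous φ
  cont_t : Continuous φt
  cont_x : Continuous φx
  cont_xx : ∀ i j, Continuous fun p => φxx p i j

/-- The class `Φ(t̂, x̂₀, T)` of Definition 6.1. -/
def PhiClass (d : ℕ) (tHat : ℝ) (xHat0 : Eucl d) (T : ℝ) (f : ℝ × Eucl d → ℝ) : Prop :=
  ∃ r > (0:ℝ), ∀ L > (0:ℝ),
    ∀ (φ φt : ℝ × Eucl d → ℝ) (φx : ℝ × Eucl d → Eucl d)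
      (φxx : ℝ × Eucl d → Matrix (Fin d) (Fin d) ℝ),
      IsC12Fin d φ φt φx φxx →
      ∀ t : ℝ, ∀ x0 : Eucl d, 0 < t → t < T →
        (∀ s : ℝ, ∀ y : Eucl d, 0 ≤ s → s ≤ T → f (s, y) - φ (s, y) ≤ f (t, x0) - φ (t, x0)) →
        ∃ C > (0:ℝ),
          (|t - tHat| + ‖x0 - xHat0‖ < r →
           |f (t, x0)| + ‖φx (t, x0)‖ + hsNorm (φxx (t, x0)) ≤ L →
           C ≤ φt (t, x0))

/-- Operator norm of a square matrix, via the associated Euclidean linear map. -/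
def matOpNorm {ι : Type*} [Fintype ι] [DecidableEq ι] (A : Matrix ι ι ℝ) : ℝ :=
  ‖LinearMap.toContinuousLinearMap (Matrix.toEuclideanLin A)‖

/-- The second-derivative matrix of `φ : ℝ^d × ℝ^d → ℝ` at a point, as a
`(2d) × (2d)` matrix indexed by `Fin d ⊕ Fin d`. -/
def hess2 {d : ℕ} (φ : Eucl d × Eucl d → ℝ) (z : Eucl d × Eucl d) :
    Matrix (Fin d ⊕ Fin d) (Fin d ⊕ Fin d) ℝ := fun k l =>
  iteratedFDeriv ℝ 2 φ z
    ![Sum.elim (fun i => ((stdBasis d i, 0) : Eucl d × Eucl d))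
        (fun j => ((0, stdBasis d j) : Eucl d × Eucl d)) k,
      Sum.elim (fun i => ((stdBasis d i, 0) : Eucl d × Eucl d))
        (fun j => ((0, stdBasis d j) : Eucl d × Eucl d)) l]

/-- Hessian matrix of `φ : ℝ^d → ℝ`. -/
def hess1 {d : ℕ} (φ : Eucl d → ℝ) (z : Eucl d) : Matrix (Fin d) (Fin d) ℝ := fun i j =>
  iteratedFDeriv ℝ 2 φ z ![stdBasis d i, stdBasis d j]


/-- The path `x - a_{t-t̂}` appearing in `S_m(t,x,t̂,a)` (for `t ≥ t̂`). -/
def zRel {d : ℕ} (tHat : ℝ) (a : Pth d) (p : ℝ × Pth d) : Pth d :=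
  shift p.2 (max (tHat - p.1) 0) - shift a (max (p.1 - tHat) 0)

section Aux

variable {d : ℕ}

instance : Nonempty PathDom := ⟨zeroPt⟩

/-- The exponential path `θ ↦ e^θ • x0`. -/
def expPath (x0 : Eucl d) : Pth d := fun θ => Real.exp θ.1 • x0

lemma tendsto_val_atBot : Tendsto (fun θ : PathDom => θ.1) atBot atBot := by
  refine tendsto_atBot_atBot.mpr fun b => ⟨⟨min b 0, Set.mem_Iic.mpr (min_le_right _ _)⟩,
    fun a ha => ?_⟩
  exact le_trans (Subtype.coe_le_coe.mpr ha) (min_le_left _ _)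

lemma expPath_mem (x0 : Eucl d) : expPath x0 ∈ C0 d := by
  constructor
  · exact (Real.continuous_exp.comp continuous_subtype_val).smul continuous_const
  · have h := (Real.tendsto_exp_atBot.comp tendsto_val_atBot).smul_const x0
    exact (by simpa using h : Tendsto (fun θ : PathDom => Real.exp θ.1 • x0) atBot (𝓝 0))

lemma expPath_zero (x0 : Eucl d) : expPath x0 zeroPt = x0 := by
  simp [expPath, zeroPt]

lemma shift_eq (x : Pth d) {h : ℝ} (hh : 0 ≤ h) :
    shift x h = fun θ : PathDom => x ⟨min (θ.1 + h) 0, Set.mem_Iic.mpr (min_le_right _ _)⟩ := by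
  funext θ
  unfold shift
  split_ifs with hθ
  · exact congrArg x (Subtype.ext (show (0:ℝ) = min (θ.1 + h) 0 from
      (min_eq_right (by linarith)).symm))
  · push_neg at hθ
    exact congrArg x (Subtype.ext (show θ.1 + h = min (θ.1 + h) 0 from
      (min_eq_left (by linarith)).symm))

lemma shift_mem_C0 {x : Pth d} (hx : x ∈ C0 d) {h : ℝ} (hh : 0 ≤ h) :
    shift x h ∈ C0 d := by
  rw [shift_eq x hh]
  constructor
  · exact hx.1.comp (Continuous.subtype_mk
      ((continuous_subtype_val.add continuous_const).min continuous_const) _)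
  · refine hx.2.comp (tendsto_atBot_atBot.mpr fun b => ⟨⟨b.1 - h,
      Set.mem_Iic.mpr (by have := b.2; simp only [Set.mem_Iic] at this; linarith)⟩,
      fun a ha => ?_⟩)
    have ha' : a.1 ≤ b.1 - h := Subtype.coe_le_coe.mpr ha
    exact Subtype.coe_le_coe.mp (by
      show min (a.1 + h) 0 ≤ b.1
      exact le_trans (min_le_left _ _) (by linarith))

lemma shift_zeroPt (x : Pth d) {h : ℝ} (hh : 0 ≤ h) : shift x h zeroPt = x zeroPt := by
  unfold shift
  rw [dif_pos (show -h ≤ (zeroPt : PathDom).1 by simp only [zeroPt]; linarith)]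

lemma bddAbove_range_norm {x : Pth d} (hx : x ∈ C0 d) :
    BddAbove (Set.range fun θ : PathDom => ‖x θ‖) := by
  obtain ⟨hc, hb⟩ := hx
  have h1 : ∀ᶠ θ in (atBot : Filter PathDom), ‖x θ‖ ≤ 1 := by
    filter_upwards [hb (Metric.closedBall_mem_nhds (0 : Eucl d) one_pos)] with θ hθ
    simpa [Metric.mem_closedBall, dist_zero_right] using hθ
  obtain ⟨A, hA⟩ := Filter.eventually_atBot.mp h1
  have hgc : Continuous fun r : ℝ => (⟨min r 0, Set.mem_Iic.mpr (min_le_right _ _)⟩ : PathDom) :=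
    Continuous.subtype_mk (continuous_id.min continuous_const) _
  have hK : IsCompact ((fun r : ℝ => (⟨min r 0, Set.mem_Iic.mpr (min_le_right _ _)⟩ : PathDom)) ''
      Set.Icc A.1 0) := (isCompact_Icc).image hgc
  obtain ⟨M, hM⟩ := (hK.bddAbove_image (hc.norm.continuousOn))
  refine ⟨max M 1, fun y hy => ?_⟩
  obtain ⟨θ, rfl⟩ := hy
  rcases le_or_gt θ.1 A.1 with hθ | hθ
  · exact le_trans (hA θ (Subtype.coe_le_coe.mp hθ)) (le_max_right _ _)
  · refine le_trans (hM ?_) (le_max_left _ _)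
    refine ⟨θ, ⟨θ.1, ⟨le_of_lt hθ, θ.2⟩, Subtype.ext ?_⟩, rfl⟩
    exact (min_eq_left θ.2)

lemma normC_nonneg {x : Pth d} (hx : x ∈ C0 d) : 0 ≤ normC x := by
  unfold normC
  exact le_trans (norm_nonneg _) (le_ciSup (bddAbove_range_norm hx) zeroPt)

lemma sliceSet_nonempty (w : ℝ × Pth d → ℝ) (t : ℝ) (x0 : Eucl d) :
    {r : ℝ | ∃ ξ ∈ C0 d, ξ zeroPt = x0 ∧ r = w (t, ξ)}.Nonempty :=
  ⟨w (t, expPath x0), expPath x0, expPath_mem x0, expPath_zero x0, rfl⟩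

lemma le_sliceSup {w : ℝ × Pth d → ℝ} {M : ℝ} (hbdd : ∀ p ∈ Lam d 0, w p ≤ M) {t : ℝ}
    (ht : 0 ≤ t) {ξ : Pth d} (hξ : ξ ∈ C0 d) : w (t, ξ) ≤ sliceSup w t (ξ zeroPt) := by
  apply le_csSup
  · exact ⟨M, fun r hr => by obtain ⟨η, hη, -, rfl⟩ := hr; exact hbdd _ ⟨ht, hη⟩⟩
  · exact ⟨ξ, hξ, rfl, rfl⟩

lemma sliceSup_le {w : ℝ × Pth d → ℝ} {t : ℝ} {x0 : Eucl d} {B : ℝ}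
    (hB : ∀ ξ ∈ C0 d, ξ zeroPt = x0 → w (t, ξ) ≤ B) : sliceSup w t x0 ≤ B := by
  refine csSup_le (sliceSet_nonempty w t x0) fun r hr => ?_
  obtain ⟨ξ, hξ, h0, rfl⟩ := hr
  exact hB ξ hξ h0

lemma tildeW_le_sliceSup_max (w : ℝ × Pth d → ℝ) (tHat : ℝ) (p : ℝ × Eucl d) :
    tildeW w tHat p ≤ sliceSup w (max p.1 tHat) p.2 := by
  unfold tildeW
  split_ifs with h
  · rw [max_eq_left h]
  · rw [max_eq_right (le_of_lt (not_le.mp h))]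
    have := Real.sqrt_nonneg (tHat - p.1)
    linarith

lemma tildeW_le {w : ℝ × Pth d → ℝ} {M : ℝ} (hbdd : ∀ p ∈ Lam d 0, w p ≤ M) {tHat : ℝ}
    (ht : 0 ≤ tHat) (p : ℝ × Eucl d) : tildeW w tHat p ≤ M :=
  (tildeW_le_sliceSup_max w tHat p).trans
    (sliceSup_le fun ξ hξ _ => hbdd _ ⟨le_trans ht (le_max_right _ _), hξ⟩)

lemma isCobounded_nhds (g : ℝ × Eucl d → ℝ) (p : ℝ × Eucl d) :
    Filter.IsCoboundedUnder (· ≤ ·) (𝓝 p) g :=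
  ⟨g p, fun a ha => (Filter.eventually_map.mp ha).self_of_nhds⟩

lemma self_le_uscEnv {g : ℝ × Eucl d → ℝ} {M : ℝ} (hg : ∀ q, g q ≤ M) (p : ℝ × Eucl d) :
    g p ≤ uscEnv g p := by
  refine le_limsup_of_frequently_le ?_ (Filter.isBoundedUnder_of ⟨M, hg⟩)
  exact fun h => h.self_of_nhds le_rfl

lemma uscEnv_le {g B : ℝ × Eucl d → ℝ} (hle : ∀ q, g q ≤ B q) {p : ℝ × Eucl d}
    (hB : ContinuousAt B p) : uscEnv g p ≤ B p := by
  have h1 : Filter.limsup g (𝓝 p) ≤ Filter.limsup B (𝓝 p) :=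
    Filter.limsup_le_limsup (Filter.Eventually.of_forall hle) (isCobounded_nhds g p)
      hB.isBoundedUnder_le
  rwa [hB.limsup_eq] at h1

lemma exists_near {g : ℝ × Eucl d → ℝ} {p : ℝ × Eucl d} {a : ℝ} (h : a < uscEnv g p)
    {δ : ℝ} (hδ : 0 < δ) : ∃ q : ℝ × Eucl d, dist q p < δ ∧ a < g q := by
  have hf := Filter.frequently_lt_of_lt_limsup (isCobounded_nhds g p) h
  have hev : ∀ᶠ q in 𝓝 p, dist q p < δ := by
    filter_upwards [Metric.ball_mem_nhds p hδ] with q hq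
    exact Metric.mem_ball.mp hq
  obtain ⟨q, hq1, hq2⟩ := (hf.and_eventually hev).exists
  exact ⟨q, hq2, hq1⟩

end Aux

set_option maxHeartbeats 1600000

/-- Lemma 6.5: the envelopes `w̃₁^{t̂,*}, w̃₂^{t̂,*}` inherit the
maximum of `w₁ + w₂ - φ` at `(t̂, x̂(0), ŷ(0))`, with matching values. -/
theorem envelope_maximum {d : ℕ}
    (w₁ w₂ : ℝ × Pth d → ℝ)
    (husc₁ : DUSCOn w₁ (Lam d 0)) (husc₂ : DUSCOn w₂ (Lam d 0))
    (hbdd₁ : BddAboveOn w₁ (Lam d 0)) (hbdd₂ : BddAboveOn w₂ (Lam d 0))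
    (hneg₁ : NegLimsupAtInfty w₁) (hneg₂ : NegLimsupAtInfty w₂)
    (tHat : ℝ) (htHat : 0 ≤ tHat)
    (ρ₁ : ℝ → ℝ → ℝ) (hρ₁ : LocalModulus ρ₁)
    (hshift₁ : ∀ t s : ℝ, tHat ≤ t → t ≤ s → ∀ x ∈ C0 d,
      w₁ (t, x) - w₁ (s, shift x (s - t)) ≤ ρ₁ (s - t) (normC x))
    (hshift₂ : ∀ t s : ℝ, tHat ≤ t → t ≤ s → ∀ x ∈ C0 d,
      w₂ (t, x) - w₂ (s, shift x (s - t)) ≤ ρ₁ (s - t) (normC x))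
    (φ : Eucl d × Eucl d → ℝ) (hφ : ContDiff ℝ 2 φ)
    (xHat yHat : Pth d) (hxHat : xHat ∈ C0 d) (hyHat : yHat ∈ C0 d)
    (hmax : ∀ t : ℝ, tHat ≤ t → ∀ x ∈ C0 d, ∀ y ∈ C0 d,
      w₁ (t, x) + w₂ (t, y) - φ (x zeroPt, y zeroPt)
        ≤ w₁ (tHat, xHat) + w₂ (tHat, yHat) - φ (xHat zeroPt, yHat zeroPt)) :
    (∀ t : ℝ, 0 ≤ t → ∀ x0 y0 : Eucl d,
      uscEnv (tildeW w₁ tHat) (t, x0) + uscEnv (tildeW w₂ tHat) (t, y0) - φ (x0, y0)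
        ≤ uscEnv (tildeW w₁ tHat) (tHat, xHat zeroPt)
          + uscEnv (tildeW w₂ tHat) (tHat, yHat zeroPt)
          - φ (xHat zeroPt, yHat zeroPt)) ∧
    uscEnv (tildeW w₁ tHat) (tHat, xHat zeroPt) = w₁ (tHat, xHat) ∧
    uscEnv (tildeW w₂ tHat) (tHat, yHat zeroPt) = w₂ (tHat, yHat) := by
  classical
  obtain ⟨M₁, hM₁⟩ := hbdd₁
  obtain ⟨M₂, hM₂⟩ := hbdd₂
  set Mstar : ℝ := w₁ (tHat, xHat) + w₂ (tHat, yHat) - φ (xHat zeroPt, yHat zeroPt)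
    with hMstar
  -- Lemma A: an upper bound for tildeW w₁
  have hA : ∀ s : ℝ, ∀ u : Eucl d, tildeW w₁ tHat (s, u) ≤ w₁ (tHat, xHat)
      + ρ₁ (max (s - tHat) 0) (normC yHat)
      + (φ (u, yHat zeroPt) - φ (xHat zeroPt, yHat zeroPt)) := by
    intro s u
    refine (tildeW_le_sliceSup_max w₁ tHat (s, u)).trans (sliceSup_le ?_)
    intro ξ hξ h0
    have hτ : tHat ≤ max s tHat := le_max_right _ _
    have hτ0 : (0:ℝ) ≤ max s tHat - tHat := by linarith
    have hy' := shift_mem_C0 hyHat hτ0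
    have hmx := hmax (max s tHat) hτ ξ hξ _ hy'
    rw [h0, shift_zeroPt yHat hτ0] at hmx
    have hsh := hshift₂ tHat (max s tHat) le_rfl hτ yHat hyHat
    have hmm : max s tHat - tHat = max (s - tHat) 0 := by
      rcases le_total s tHat with h | h
      · rw [max_eq_right h, sub_self, max_eq_right (by linarith)]
      · rw [max_eq_left h, max_eq_left (by linarith)]
    rw [← hmm]
    linarith [hmx, hsh, hMstar]
  have hB : ∀ s : ℝ, ∀ v : Eucl d, tildeW w₂ tHat (s, v) ≤ w₂ (tHat, yHat)
      + ρ₁ (max (s - tHat) 0) (normC xHat)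
      + (φ (xHat zeroPt, v) - φ (xHat zeroPt, yHat zeroPt)) := by
    intro s v
    refine (tildeW_le_sliceSup_max w₂ tHat (s, v)).trans (sliceSup_le ?_)
    intro η hη h0
    have hτ : tHat ≤ max s tHat := le_max_right _ _
    have hτ0 : (0:ℝ) ≤ max s tHat - tHat := by linarith
    have hx' := shift_mem_C0 hxHat hτ0
    have hmx := hmax (max s tHat) hτ _ hx' η hη
    rw [h0, shift_zeroPt xHat hτ0] at hmx
    have hsh := hshift₁ tHat (max s tHat) le_rfl hτ xHat hxHat
    have hmm : max s tHat - tHat = max (s - tHat) 0 := by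
      rcases le_total s tHat with h | h
      · rw [max_eq_right h, sub_self, max_eq_right (by linarith)]
      · rw [max_eq_left h, max_eq_left (by linarith)]
    rw [← hmm]
    linarith [hmx, hsh, hMstar]
  -- Claim: the envelope values at the hat point
  have hC1 : uscEnv (tildeW w₁ tHat) (tHat, xHat zeroPt) = w₁ (tHat, xHat) := by
    apply le_antisymm
    · have hcont : Continuous fun p : ℝ × Eucl d => w₁ (tHat, xHat)
          + ρ₁ (max (p.1 - tHat) 0) (normC yHat)
          + (φ (p.2, yHat zeroPt) - φ (xHat zeroPt, yHat zeroPt)) := by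
        refine (continuous_const.add ?_).add (Continuous.sub ?_ continuous_const)
        · exact hρ₁.cont.comp (((continuous_fst.sub continuous_const).max
            continuous_const).prodMk continuous_const)
        · exact hφ.continuous.comp (continuous_snd.prodMk continuous_const)
      have h := uscEnv_le (p := (tHat, xHat zeroPt)) (fun q => hA q.1 q.2) hcont.continuousAt
      simpa [sub_self, hρ₁.zero (normC yHat) (normC_nonneg hyHat)] using h
    · refine le_trans ?_ (self_le_uscEnv (tildeW_le hM₁ htHat) (tHat, xHat zeroPt))
      have heq : tildeW w₁ tHat (tHat, xHat zeroPt) = sliceSup w₁ tHat (xHat zeroPt) :=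
        if_pos le_rfl
      rw [heq]
      exact le_sliceSup hM₁ htHat hxHat
  have hC2 : uscEnv (tildeW w₂ tHat) (tHat, yHat zeroPt) = w₂ (tHat, yHat) := by
    apply le_antisymm
    · have hcont : Continuous fun p : ℝ × Eucl d => w₂ (tHat, yHat)
          + ρ₁ (max (p.1 - tHat) 0) (normC xHat)
          + (φ (xHat zeroPt, p.2) - φ (xHat zeroPt, yHat zeroPt)) := by
        refine (continuous_const.add ?_).add (Continuous.sub ?_ continuous_const)
        · exact hρ₁.cont.comp (((continuous_fst.sub continuous_const).max
            continuous_const).prodMk continuous_const)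
        · exact hφ.continuous.comp (continuous_const.prodMk continuous_snd)
      have h := uscEnv_le (p := (tHat, yHat zeroPt)) (fun q => hB q.1 q.2) hcont.continuousAt
      simpa [sub_self, hρ₁.zero (normC xHat) (normC_nonneg hxHat)] using h
    · refine le_trans ?_ (self_le_uscEnv (tildeW_le hM₂ htHat) (tHat, yHat zeroPt))
      have heq : tildeW w₂ tHat (tHat, yHat zeroPt) = sliceSup w₂ tHat (yHat zeroPt) :=
        if_pos le_rfl
      rw [heq]
      exact le_sliceSup hM₂ htHat hyHat
  -- the key inequality
  have hkey : ∀ t : ℝ, ∀ x0 y0 : Eucl d, ∀ a₁ a₂ : ℝ,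
      a₁ < uscEnv (tildeW w₁ tHat) (t, x0) → a₂ < uscEnv (tildeW w₂ tHat) (t, y0) →
      a₁ + a₂ ≤ Mstar + φ (x0, y0) := by
    intro t x0 y0 a₁ a₂ ha₁ ha₂
    obtain ⟨c₁, hc₁, R₁, hR₁⟩ := hneg₁
    obtain ⟨c₂, hc₂, R₂, hR₂⟩ := hneg₂
    have hN₁0 : (0:ℝ) ≤ max R₁ (max (a₁ / c₁) 0) := le_trans (le_max_right _ _) (le_max_right _ _)
    have hN₂0 : (0:ℝ) ≤ max R₂ (max (a₂ / c₂) 0) := le_trans (le_max_right _ _) (le_max_right _ _)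
    have hstep : ∀ ε : ℝ, 0 < ε → a₁ + a₂ ≤ Mstar + φ (x0, y0) + ε := by
      intro ε hε
      have hε3 : 0 < ε / 3 := by linarith
      obtain ⟨δ₁, hδ₁p, hδ₁⟩ := Metric.continuousAt_iff.mp
        ((hρ₁.cont.comp (continuous_id.prodMk continuous_const)).continuousAt :
          ContinuousAt (fun h : ℝ => ρ₁ h (max R₁ (max (a₁ / c₁) 0))) 0) (ε/3) hε3
      obtain ⟨δ₂, hδ₂p, hδ₂⟩ := Metric.continuousAt_iff.mp
        ((hρ₁.cont.comp (continuous_id.prodMk continuous_const)).continuousAt :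
          ContinuousAt (fun h : ℝ => ρ₁ h (max R₂ (max (a₂ / c₂) 0))) 0) (ε/3) hε3
      obtain ⟨δ₃, hδ₃p, hδ₃⟩ := Metric.continuousAt_iff.mp
        ((hφ.continuous.continuousAt) : ContinuousAt φ (x0, y0)) (ε/3) hε3
      have hδp : (0:ℝ) < min (min δ₁ δ₂ / 2) δ₃ :=
        lt_min (div_pos (lt_min hδ₁p hδ₂p) two_pos) hδ₃p
      obtain ⟨⟨s, u⟩, hd1, hgt1⟩ := exists_near ha₁ hδp
      obtain ⟨⟨s', v⟩, hd2, hgt2⟩ := exists_near ha₂ hδp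
      rw [Prod.dist_eq] at hd1 hd2
      have hds : |s - t| < min (min δ₁ δ₂ / 2) δ₃ := by
        have := lt_of_le_of_lt (le_max_left _ _) hd1
        rwa [Real.dist_eq] at this
      have hdu : dist u x0 < min (min δ₁ δ₂ / 2) δ₃ := lt_of_le_of_lt (le_max_right _ _) hd1
      have hds' : |s' - t| < min (min δ₁ δ₂ / 2) δ₃ := by
        have := lt_of_le_of_lt (le_max_left _ _) hd2
        rwa [Real.dist_eq] at this
      have hdv : dist v y0 < min (min δ₁ δ₂ / 2) δ₃ := lt_of_le_of_lt (le_max_right _ _) hd2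
      have hτhat : tHat ≤ max s tHat := le_max_right _ _
      have hτ'hat : tHat ≤ max s' tHat := le_max_right _ _
      have hτ0 : (0:ℝ) ≤ max s tHat := le_trans htHat hτhat
      have hτ'0 : (0:ℝ) ≤ max s' tHat := le_trans htHat hτ'hat
      have hτσ : max s tHat ≤ max (max s tHat) (max s' tHat) := le_max_left _ _
      have hτ'σ : max s' tHat ≤ max (max s tHat) (max s' tHat) := le_max_right _ _
      have hσhat : tHat ≤ max (max s tHat) (max s' tHat) := le_trans hτhat hτσ
      obtain ⟨r₁, hr₁mem, hr₁⟩ := exists_lt_of_lt_csSup (sliceSet_nonempty w₁ (max s tHat) u)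
        (lt_of_lt_of_le hgt1 (tildeW_le_sliceSup_max w₁ tHat (s, u)))
      obtain ⟨ξ, hξ, hξ0, rfl⟩ := hr₁mem
      obtain ⟨r₂, hr₂mem, hr₂⟩ := exists_lt_of_lt_csSup (sliceSet_nonempty w₂ (max s' tHat) v)
        (lt_of_lt_of_le hgt2 (tildeW_le_sliceSup_max w₂ tHat (s', v)))
      obtain ⟨η, hη, hη0, rfl⟩ := hr₂mem
      -- norm bounds
      have hξnorm : normC ξ ≤ max R₁ (max (a₁ / c₁) 0) := by
        rcases le_or_gt R₁ (max s tHat + normC ξ) with hcase | hcase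
        · have hb := hR₁ (max s tHat, ξ) ⟨hτ0, hξ⟩ hcase
          have h1 : a₁ < c₁ * (max s tHat + normC ξ) := lt_of_lt_of_le hr₁ hb
          have h2 : a₁ < c₁ * normC ξ := by nlinarith
          have h3 : normC ξ < a₁ / c₁ := by
            rw [lt_div_iff_of_neg hc₁]
            linarith [mul_comm c₁ (normC ξ)]
          exact le_trans h3.le (le_trans (le_max_left _ _) (le_max_right _ _))
        · exact le_trans (by linarith) (le_max_left _ _)
      have hηnorm : normC η ≤ max R₂ (max (a₂ / c₂) 0) := by
        rcases le_or_gt R₂ (max s' tHat + normC η) with hcase | hcase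
        · have hb := hR₂ (max s' tHat, η) ⟨hτ'0, hη⟩ hcase
          have h1 : a₂ < c₂ * (max s' tHat + normC η) := lt_of_lt_of_le hr₂ hb
          have h2 : a₂ < c₂ * normC η := by nlinarith
          have h3 : normC η < a₂ / c₂ := by
            rw [lt_div_iff_of_neg hc₂]
            linarith [mul_comm c₂ (normC η)]
          exact le_trans h3.le (le_trans (le_max_left _ _) (le_max_right _ _))
        · exact le_trans (by linarith) (le_max_left _ _)
      -- the time gaps are small
      have hss' : |s' - s| < min δ₁ δ₂ := by
        have h1 : |s' - s| ≤ |s' - t| + |t - s| := abs_sub_le s' t s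
        have h2 : |t - s| = |s - t| := abs_sub_comm t s
        have h3 : min (min δ₁ δ₂ / 2) δ₃ ≤ min δ₁ δ₂ / 2 := min_le_left _ _
        linarith
      have hgap1 : max (max s tHat) (max s' tHat) - max s tHat < δ₁ := by
        have h1 : |max s' tHat - max s tHat| ≤ |s' - s| := abs_max_sub_max_le_abs s' s tHat
        have h2 : max (max s tHat) (max s' tHat) - max s tHat ≤ |max s' tHat - max s tHat| := by
          rcases le_total (max s' tHat) (max s tHat) with h | h
          · rw [max_eq_left h]
            simp [abs_nonneg]
          · rw [max_eq_right h]
            exact le_abs_self _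
        have h3 : min δ₁ δ₂ ≤ δ₁ := min_le_left _ _
        linarith
      have hgap2 : max (max s tHat) (max s' tHat) - max s' tHat < δ₂ := by
        have h1 : |max s tHat - max s' tHat| ≤ |s - s'| := abs_max_sub_max_le_abs s s' tHat
        have h2 : max (max s tHat) (max s' tHat) - max s' tHat ≤ |max s tHat - max s' tHat| := by
          rcases le_total (max s tHat) (max s' tHat) with h | h
          · rw [max_eq_right h]
            simp [abs_nonneg]
          · rw [max_eq_left h]
            exact le_abs_self _
        have h3 : min δ₁ δ₂ ≤ δ₂ := min_le_right _ _
        have h4 : |s - s'| = |s' - s| := abs_sub_comm s s'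
        linarith
      have hsub0 : (0:ℝ) ≤ max (max s tHat) (max s' tHat) - max s tHat := by linarith
      have hsub'0 : (0:ℝ) ≤ max (max s tHat) (max s' tHat) - max s' tHat := by linarith
      -- ρ₁ is small on the gaps
      have hρ1 : ρ₁ (max (max s tHat) (max s' tHat) - max s tHat) (max R₁ (max (a₁ / c₁) 0))
          < ε / 3 := by
        have hd : dist (max (max s tHat) (max s' tHat) - max s tHat) (0:ℝ) < δ₁ := by
          rw [Real.dist_eq, sub_zero, abs_of_nonneg hsub0]
          exact hgap1
        have h := hδ₁ hd
        simp only [Function.comp_apply, Function.comp, id_eq, Real.dist_eq, hρ₁.zero _ hN₁0, sub_zero] at h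
        exact lt_of_le_of_lt (le_abs_self _) h
      have hρ2 : ρ₁ (max (max s tHat) (max s' tHat) - max s' tHat) (max R₂ (max (a₂ / c₂) 0))
          < ε / 3 := by
        have hd : dist (max (max s tHat) (max s' tHat) - max s' tHat) (0:ℝ) < δ₂ := by
          rw [Real.dist_eq, sub_zero, abs_of_nonneg hsub'0]
          exact hgap2
        have h := hδ₂ hd
        simp only [Function.comp_apply, Function.comp, id_eq, Real.dist_eq, hρ₁.zero _ hN₂0, sub_zero] at h
        exact lt_of_le_of_lt (le_abs_self _) h
      -- shift and use the maximum
      have hsh1 := hshift₁ (max s tHat) (max (max s tHat) (max s' tHat)) hτhat hτσ ξ hξ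
      have hsh2 := hshift₂ (max s' tHat) (max (max s tHat) (max s' tHat)) hτ'hat hτ'σ η hη
      have hmx := hmax (max (max s tHat) (max s' tHat)) hσhat
        _ (shift_mem_C0 hξ hsub0) _ (shift_mem_C0 hη hsub'0)
      rw [shift_zeroPt ξ hsub0, shift_zeroPt η hsub'0, hξ0, hη0] at hmx
      have hmono1 := hρ₁.mono (max (max s tHat) (max s' tHat) - max s tHat) (normC ξ)
        (max R₁ (max (a₁ / c₁) 0)) hsub0 (normC_nonneg hξ) hξnorm
      have hmono2 := hρ₁.mono (max (max s tHat) (max s' tHat) - max s' tHat) (normC η)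
        (max R₂ (max (a₂ / c₂) 0)) hsub'0 (normC_nonneg hη) hηnorm
      have hφb : |φ (u, v) - φ (x0, y0)| < ε / 3 := by
        have hdp : dist ((u, v) : Eucl d × Eucl d) (x0, y0) < δ₃ := by
          rw [Prod.dist_eq]
          exact max_lt (lt_of_lt_of_le hdu (min_le_right _ _))
            (lt_of_lt_of_le hdv (min_le_right _ _))
        have h := hδ₃ hdp
        rwa [Real.dist_eq] at h
      have hφ1 := (abs_lt.mp hφb).2
      linarith [hr₁, hr₂, hsh1, hsh2, hmx, hρ1, hρ2, hmono1, hmono2, hMstar]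
    by_contra hcon
    push_neg at hcon
    linarith [hstep ((a₁ + a₂ - (Mstar + φ (x0, y0))) / 2) (by linarith)]
  have hsum : ∀ t : ℝ, ∀ x0 y0 : Eucl d,
      uscEnv (tildeW w₁ tHat) (t, x0) + uscEnv (tildeW w₂ tHat) (t, y0)
        ≤ Mstar + φ (x0, y0) := by
    intro t x0 y0
    by_contra hcon
    push_neg at hcon
    have he : (0:ℝ) < uscEnv (tildeW w₁ tHat) (t, x0) + uscEnv (tildeW w₂ tHat) (t, y0)
        - (Mstar + φ (x0, y0)) := by linarith
    have h := hkey t x0 y0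
      (uscEnv (tildeW w₁ tHat) (t, x0)
        - (uscEnv (tildeW w₁ tHat) (t, x0) + uscEnv (tildeW w₂ tHat) (t, y0)
          - (Mstar + φ (x0, y0))) / 3)
      (uscEnv (tildeW w₂ tHat) (t, y0)
        - (uscEnv (tildeW w₁ tHat) (t, x0) + uscEnv (tildeW w₂ tHat) (t, y0)
          - (Mstar + φ (x0, y0))) / 3)
      (by linarith) (by linarith)
    linarith
  refine ⟨?_, hC1, hC2⟩
  intro t ht x0 y0
  rw [hC1, hC2]
  have h := hsum t x0 y0
  linarith [hMstar]
end PathHJB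
end
end

section
/- Shift regularity of the penalized subsolution (Lemma 6.10): Let λ > 0, Ĉ > 0 and let W₁ : 𝒞₀ → ℝ satisfy |W₁(x) - W₁(x_h)| ≤ Ĉ(1+|x|_C)(h + h^{1/2} + 1 - e^{-λh}) for all h ≥ 0 and x ∈ 𝒞₀. Let ε > 0, β > 0, t̂ ≥ 0, x̂, ξ̂ ∈ 𝒞₀, and let (t_i, x^i)_{i≥0} ⊆ [0,∞) × 𝒞₀ satisfy 0 ≤ t_i ≤ t̂ for all i and sup_i |x^i|_C < ∞ (so the series below converges). Define, for (t,x) ∈ Λ^{t̂}, w₁(t,x) := W₁(x) - 2⁵β·Υ(t,x,t̂,ξ̂) - ε·Υ^{1,3}(x) - ε·Ῡ(t̂,x̂,t,x) - Σ_{i=0}^∞ 2^{-i}·Ῡ(t_i,x^i,t,x). Then for every T > t̂, all t̂ ≤ t ≤ s ≤ T and all x ∈ 𝒞₀: w₁(t,x) - w₁(s, x_{s-t}) ≤ Ĉ(1+|x|_C)((s-t) + (s-t)^{1/2} + 1 - e^{-λ(s-t)}) + (2ε+4)T(s-t). -/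
open Filter Topology MeasureTheory Matrix
open scoped RealInnerProductSpace

noncomputable section

namespace PathHJB

lemma shift_zero {d : ℕ} (x : Pth d) : shift x 0 = x := by
  funext θ
  simp only [shift, neg_zero]
  split_ifs with h
  · have hθ : θ = zeroPt := Subtype.ext (le_antisymm θ.2 h)
    rw [hθ]
  · exact congrArg x (Subtype.ext (add_zero θ.1))

lemma zeroPt_coe : (zeroPt : PathDom).1 = 0 := rfl

lemma shift_apply_zero {d : ℕ} (x : Pth d) {h : ℝ} (hh : 0 ≤ h) :
    shift x h zeroPt = x zeroPt := by
  simp only [shift]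
  rw [dif_pos (by rw [zeroPt_coe]; linarith)]

lemma shift_shift {d : ℕ} (x : Pth d) {a b : ℝ} (ha : 0 ≤ a) (hb : 0 ≤ b) :
    shift (shift x a) b = shift x (a + b) := by
  funext θ
  simp only [shift]
  split_ifs with h1 h2 h3 h4 h5 <;>
    first
      | rfl
      | (exfalso; push_neg at *; have := zeroPt_coe; linarith)
      | (exact congrArg x (Subtype.ext (by ring)))

lemma shift_sub {d : ℕ} (x y : Pth d) (h : ℝ) :
    shift (x - y) h = shift x h - shift y h := by
  funext θ
  simp only [shift, Pi.sub_apply]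
  split_ifs <;> rfl

lemma normC_shift {d : ℕ} (x : Pth d) {h : ℝ} (hh : 0 ≤ h) :
    normC (shift x h) = normC x := by
  have hrange : Set.range (fun θ : PathDom => ‖shift x h θ‖)
      = Set.range (fun θ : PathDom => ‖x θ‖) := by
    ext r
    constructor
    · rintro ⟨θ, rfl⟩
      by_cases hθ : -h ≤ θ.1
      · exact ⟨zeroPt, by simp [shift, hθ]⟩
      · push_neg at hθ
        refine ⟨⟨θ.1 + h, Set.mem_Iic.mpr (show θ.1 + h ≤ 0 by linarith)⟩, ?_⟩
        simp [shift, not_le.mpr hθ]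
    · rintro ⟨θ, rfl⟩
      by_cases hθ : θ.1 = 0
      · refine ⟨zeroPt, ?_⟩
        simp only [shift]
        rw [dif_pos (by rw [zeroPt_coe]; linarith)]
        exact congrArg (fun z => ‖z‖) (congrArg x (Subtype.ext hθ.symm))
      · have hθ' : θ.1 < 0 := lt_of_le_of_ne θ.2 hθ
        refine ⟨⟨θ.1 - h, Set.mem_Iic.mpr (show θ.1 - h ≤ 0 by linarith)⟩, ?_⟩
        simp only [shift]
        rw [dif_neg (by simp; linarith)]
        exact congrArg (fun z => ‖z‖) (congrArg x (Subtype.ext (by ring)))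
  exact congrArg sSup hrange

lemma SmP_shift {d : ℕ} {m : ℕ} {p1 q1 s : ℝ} (x y : Pth d)
    (hq : q1 ≤ p1) (hs : p1 ≤ s) :
    SmP m (s, shift x (s - p1)) (q1, y) = SmP m (p1, x) (q1, y) := by
  have e1 : max (q1 - s) 0 = 0 := max_eq_right (by linarith)
  have e2 : max (s - q1) 0 = s - q1 := max_eq_left (by linarith)
  have e3 : max (q1 - p1) 0 = 0 := max_eq_right (by linarith)
  have e4 : max (p1 - q1) 0 = p1 - q1 := max_eq_left (by linarith)
  have e5 : shift y (s - q1) = shift (shift y (p1 - q1)) (s - p1) := by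
    rw [shift_shift y (by linarith) (by linarith)]
    congr 1; ring
  have hn : normC (shift (shift x (s - p1)) 0 - shift (shift y (p1 - q1)) (s - p1))
      = normC (shift x 0 - shift y (p1 - q1)) := by
    rw [shift_zero, shift_zero]
    have : shift x (s - p1) - shift (shift y (p1 - q1)) (s - p1)
        = shift (x - shift y (p1 - q1)) (s - p1) := (shift_sub _ _ _).symm
    rw [this, normC_shift _ (by linarith)]
  have hz : (shift x (s - p1)) zeroPt = x zeroPt := shift_apply_zero x (by linarith)
  unfold SmP
  simp only [e1, e2, e3, e4, e5, hz]
  rw [hn]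

lemma SmP_shift' {d : ℕ} {m : ℕ} {p1 q1 s : ℝ} (x y : Pth d)
    (hp : p1 ≤ q1) (hs : q1 ≤ s) :
    SmP m (p1, x) (s, shift y (s - q1)) = SmP m (p1, x) (q1, y) := by
  have e1 : max (s - p1) 0 = s - p1 := max_eq_left (by linarith)
  have e2 : max (p1 - s) 0 = 0 := max_eq_right (by linarith)
  have e3 : max (q1 - p1) 0 = q1 - p1 := max_eq_left (by linarith)
  have e4 : max (p1 - q1) 0 = 0 := max_eq_right (by linarith)
  have e5 : shift x (s - p1) = shift (shift x (q1 - p1)) (s - q1) := by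
    rw [shift_shift x (by linarith) (by linarith)]
    congr 1; ring
  have hn : normC (shift (shift x (q1 - p1)) (s - q1) - shift (shift y (s - q1)) 0)
      = normC (shift x (q1 - p1) - shift y 0) := by
    rw [shift_zero, shift_zero]
    have : shift (shift x (q1 - p1)) (s - q1) - shift y (s - q1)
        = shift (shift x (q1 - p1) - y) (s - q1) := (shift_sub _ _ _).symm
    rw [this, normC_shift _ (by linarith)]
  have hz : (shift y (s - q1)) zeroPt = y zeroPt := shift_apply_zero y (by linarith)
  unfold SmP
  simp only [e1, e2, e3, e4, e5, hz]
  rw [hn]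

/-- Lemma 6.10: shift regularity of the penalized
subsolution `w₁`. -/
theorem penalized_shift_regularity {d : ℕ} (lam Ch : ℝ) (hlam : 0 < lam) (hCh : 0 < Ch)
    (W₁ : Pth d → ℝ)
    (hW : ∀ h : ℝ, 0 ≤ h → ∀ x ∈ C0 d,
      |W₁ x - W₁ (shift x h)|
        ≤ Ch * (1 + normC x) * (h + Real.sqrt h + 1 - Real.exp (-lam * h)))
    (ε β tHat : ℝ) (hε : 0 < ε) (hβ : 0 < β) (htHat : 0 ≤ tHat)
    (xHat ξHat : Pth d) (hxHat : xHat ∈ C0 d) (hξHat : ξHat ∈ C0 d)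
    (ti : ℕ → ℝ) (xi : ℕ → Pth d)
    (hti : ∀ i, 0 ≤ ti i ∧ ti i ≤ tHat) (hxi : ∀ i, xi i ∈ C0 d)
    (K : ℝ) (hK : ∀ i, normC (xi i) ≤ K) :
    ∀ T : ℝ, tHat < T → ∀ t s : ℝ, tHat ≤ t → t ≤ s → s ≤ T → ∀ x ∈ C0 d,
      (W₁ x - 2 ^ 5 * β * UpsP 3 3 (t, x) (tHat, ξHat) - ε * Ups0 1 3 x
          - ε * UpsBarP 3 3 (tHat, xHat) (t, x)
          - ∑' i : ℕ, (1 / 2 : ℝ) ^ i * UpsBarP 3 3 (ti i, xi i) (t, x))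
        - (W₁ (shift x (s - t)) - 2 ^ 5 * β * UpsP 3 3 (s, shift x (s - t)) (tHat, ξHat)
            - ε * Ups0 1 3 (shift x (s - t))
            - ε * UpsBarP 3 3 (tHat, xHat) (s, shift x (s - t))
            - ∑' i : ℕ, (1 / 2 : ℝ) ^ i * UpsBarP 3 3 (ti i, xi i) (s, shift x (s - t)))
        ≤ Ch * (1 + normC x) * ((s - t) + Real.sqrt (s - t) + 1 - Real.exp (-lam * (s - t)))
          + (2 * ε + 4) * T * (s - t) := by
  intro T hT t s htt hts hsT x hx
  have hst : 0 ≤ s - t := by linarith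
  -- W₁ term
  have eW : W₁ x - W₁ (shift x (s - t))
      ≤ Ch * (1 + normC x) * ((s - t) + Real.sqrt (s - t) + 1 - Real.exp (-lam * (s - t))) :=
    le_trans (le_abs_self _) (hW (s - t) hst x hx)
  -- penalty equalities
  have eq1 : UpsP 3 3 (s, shift x (s - t)) (tHat, ξHat) = UpsP 3 3 (t, x) (tHat, ξHat) := by
    unfold UpsP
    dsimp only
    rw [SmP_shift x ξHat htt hts, shift_apply_zero x hst]
  have eq2 : Ups0 1 3 (shift x (s - t)) = Ups0 1 3 x := by
    unfold Ups0
    rw [normC_shift x hst, shift_apply_zero x hst]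
  have eq3 : UpsBarP 3 3 (tHat, xHat) (s, shift x (s - t))
      = UpsBarP 3 3 (tHat, xHat) (t, x) + ((s - tHat) ^ 2 - (t - tHat) ^ 2) := by
    unfold UpsBarP UpsP
    dsimp only
    rw [SmP_shift' xHat x htt hts, shift_apply_zero x hst]
    ring
  have eq4 : ∀ i : ℕ, UpsBarP 3 3 (ti i, xi i) (s, shift x (s - t))
      = UpsBarP 3 3 (ti i, xi i) (t, x) + ((s - ti i) ^ 2 - (t - ti i) ^ 2) := by
    intro i
    unfold UpsBarP UpsP
    dsimp only
    rw [SmP_shift' (xi i) x (le_trans (hti i).2 htt) hts, shift_apply_zero x hst]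
    ring
  -- the series
  set f : ℕ → ℝ := fun i => (1 / 2 : ℝ) ^ i * UpsBarP 3 3 (ti i, xi i) (t, x) with hf
  set g : ℕ → ℝ := fun i => (1 / 2 : ℝ) ^ i * ((s - ti i) ^ 2 - (t - ti i) ^ 2) with hg
  have hfs : (fun i : ℕ => (1 / 2 : ℝ) ^ i * UpsBarP 3 3 (ti i, xi i) (s, shift x (s - t)))
      = fun i => f i + g i := by
    funext i
    rw [eq4 i, hf, hg]
    ring
  have hd : ∀ i, 0 ≤ (s - ti i) ^ 2 - (t - ti i) ^ 2 := by
    intro i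
    have h1 := (hti i).1
    have h2 := (hti i).2
    nlinarith [mul_nonneg hst (show (0:ℝ) ≤ s + t - 2 * ti i by linarith)]
  have hdle : ∀ i, (s - ti i) ^ 2 - (t - ti i) ^ 2 ≤ 2 * T * (s - t) := by
    intro i
    have h1 := (hti i).1
    have h2 := (hti i).2
    nlinarith [mul_le_mul_of_nonneg_left (show s + t - 2 * ti i ≤ 2 * T by linarith) hst]
  have hgeo : Summable (fun i : ℕ => (1 / 2 : ℝ) ^ i) :=
    summable_geometric_of_lt_one (by norm_num) (by norm_num)
  have hg0 : ∀ i, 0 ≤ g i := fun i =>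
    mul_nonneg (by positivity) (hd i)
  have hgle : ∀ i, g i ≤ (1 / 2 : ℝ) ^ i * (2 * T * (s - t)) := fun i =>
    mul_le_mul_of_nonneg_left (hdle i) (by positivity)
  have hgsum : Summable g := Summable.of_nonneg_of_le hg0 hgle (hgeo.mul_right _)
  have htsum_g : ∑' i, g i ≤ 4 * T * (s - t) := by
    have := Summable.tsum_le_tsum hgle hgsum (hgeo.mul_right _)
    rw [tsum_mul_right, tsum_geometric_two] at this
    linarith
  have eqT : (∑' i : ℕ, (1 / 2 : ℝ) ^ i * UpsBarP 3 3 (ti i, xi i) (s, shift x (s - t)))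
      - (∑' i : ℕ, (1 / 2 : ℝ) ^ i * UpsBarP 3 3 (ti i, xi i) (t, x))
      ≤ 4 * T * (s - t) := by
    by_cases hfsum : Summable f
    · have h1 : (∑' i : ℕ, (1 / 2 : ℝ) ^ i * UpsBarP 3 3 (ti i, xi i) (s, shift x (s - t)))
          = (∑' i, f i) + ∑' i, g i := by
        rw [hfs]
        exact Summable.tsum_add hfsum hgsum
      rw [h1]
      have : (∑' i : ℕ, (1 / 2 : ℝ) ^ i * UpsBarP 3 3 (ti i, xi i) (t, x)) = ∑' i, f i := rfl
      rw [this]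
      linarith
    · have hfs' : ¬ Summable (fun i : ℕ =>
          (1 / 2 : ℝ) ^ i * UpsBarP 3 3 (ti i, xi i) (s, shift x (s - t))) := by
        rw [hfs]
        intro hsum
        exact hfsum (by simpa using hsum.sub hgsum)
      rw [tsum_eq_zero_of_not_summable hfs',
        tsum_eq_zero_of_not_summable (by exact hfsum : ¬ Summable fun i : ℕ =>
          (1 / 2 : ℝ) ^ i * UpsBarP 3 3 (ti i, xi i) (t, x))]
      nlinarith
  have heps : ε * ((s - tHat) ^ 2 - (t - tHat) ^ 2) ≤ ε * (2 * T * (s - t)) := by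
    apply mul_le_mul_of_nonneg_left _ hε.le
    nlinarith [mul_le_mul_of_nonneg_left (show s + t - 2 * tHat ≤ 2 * T by linarith) hst]
  rw [eq1, eq2, eq3]
  nlinarith [eW, eqT, heps]
end PathHJB
end
end
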